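/- For any memory-one ZD strategy of player a satisfying Σ_{σ_a} c_{σ_a} T̂_a(σ_a|σ') = α_1 s_1(σ') + α_2 s_2(σ') + α_0 for all σ' ∈ A², and any distribution P* on A² satisfying Akin's condition Σ_{σ'} P*(σ') T̂_a(σ_a|σ') = 0 for all σ_a, the linear payoff relation 0 = α_1 ⟨s_1⟩* + α_2 ⟨s_2⟩* + α_0 holds, where ⟨s_b⟩* := Σ_σ s_b(σ) P*(σ). -/
import Mathlib

/-- A ZD strategy together with Akin's condition enforces the linear payoff relation
`0 = α1 ⟨s1⟩* + α2 ⟨s2⟩* + α0`. -/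
theorem stmt8 {M : ℕ} (s1 s2 : Fin M × Fin M → ℝ)
    (That : Fin M → Fin M × Fin M → ℝ) (c : Fin M → ℝ) (α0 α1 α2 : ℝ)
    (hZD : ∀ σ' : Fin M × Fin M,
      ∑ σa : Fin M, c σa * That σa σ' = α1 * s1 σ' + α2 * s2 σ' + α0)
    (Pstar : Fin M × Fin M → ℝ)
    (hpos : ∀ σ, 0 ≤ Pstar σ) (hsum : ∑ σ : Fin M × Fin M, Pstar σ = 1)
    (hAkin : ∀ σa : Fin M, ∑ σ' : Fin M × Fin M, Pstar σ' * That σa σ' = 0) :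
    0 = α1 * (∑ σ : Fin M × Fin M, s1 σ * Pstar σ)
      + α2 * (∑ σ : Fin M × Fin M, s2 σ * Pstar σ) + α0 := by
  have key : ∑ σ' : Fin M × Fin M, Pstar σ' * (∑ σa : Fin M, c σa * That σa σ') = 0 := by
    calc ∑ σ' : Fin M × Fin M, Pstar σ' * (∑ σa : Fin M, c σa * That σa σ')
        = ∑ σa : Fin M, c σa * ∑ σ' : Fin M × Fin M, Pstar σ' * That σa σ' := by
          simp only [Finset.mul_sum]
          rw [Finset.sum_comm]
          exact Finset.sum_congr rfl fun σa _ =>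
            Finset.sum_congr rfl fun σ' _ => by ring
      _ = 0 := by simp [hAkin]
  have key2 : ∑ σ' : Fin M × Fin M, Pstar σ' * (α1 * s1 σ' + α2 * s2 σ' + α0) = 0 := by
    rw [← key]
    exact Finset.sum_congr rfl fun σ' _ => by rw [hZD σ']
  calc (0:ℝ) = ∑ σ' : Fin M × Fin M, Pstar σ' * (α1 * s1 σ' + α2 * s2 σ' + α0) := key2.symm
    _ = α1 * (∑ σ : Fin M × Fin M, s1 σ * Pstar σ)
      + α2 * (∑ σ : Fin M × Fin M, s2 σ * Pstar σ)
      + α0 * ∑ σ : Fin M × Fin M, Pstar σ := by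
        simp only [Finset.mul_sum, ← Finset.sum_add_distrib]
        exact Finset.sum_congr rfl fun σ _ => by ring
    _ = _ := by rw [hsum, mul_one]
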